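/- With the notation of the Haar wavelet expansion of an empirical distribution, the Wasserstein-1 distance between the reconstructed cdf F*_J and the empirical cdf F satisfies W(F*_J, F) = ∫₀¹ |F*_J(x) − F(x)| dx ≤ 2^{−(J+1)}. -/

import Mathlib

open MeasureTheory Finset

/-- The Haar wavelet function `ψ_{jk}(t) = 2^{j/2} ψ(2^j t - k)`. -/
noncomputable def haar (j k : ℕ) (t : ℝ) : ℝ :=
  if (k : ℝ) / 2 ^ j ≤ t ∧ t < ((k : ℝ) + 1 / 2) / 2 ^ j then (2 : ℝ) ^ ((j : ℝ) / 2)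
  else if ((k : ℝ) + 1 / 2) / 2 ^ j ≤ t ∧ t < ((k : ℝ) + 1) / 2 ^ j then
    -(2 : ℝ) ^ ((j : ℝ) / 2)
  else 0

/-- The empirical cdf of samples `X₁,…,Xₙ` (ties at dyadic points handled by the strict
inequality convention, samples in `[0,1)`). -/
noncomputable def empCdf (n : ℕ) (X : Fin n → ℝ) (x : ℝ) : ℝ :=
  (1 / n) * ∑ i, (if X i < x then (1 : ℝ) else 0)

/-- Empirical wavelet coefficient `a*_{jk} = (1/n) Σᵢ ψ_{jk}(Xᵢ)`. -/
noncomputable def empCoef (n : ℕ) (X : Fin n → ℝ) (j k : ℕ) : ℝ :=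
  (1 / n) * ∑ i, haar j k (X i)

/-- The `J`-th order wavelet expansion `f*_J` of the empirical distribution. -/
noncomputable def waveletPdf (n : ℕ) (X : Fin n → ℝ) (J : ℕ) (x : ℝ) : ℝ :=
  1 + ∑ j ∈ range (J + 1), ∑ k ∈ range (2 ^ j), empCoef n X j k * haar j k x


lemma floor_half (y : ℝ) : ⌊y⌋ = ⌊2 * y⌋ / 2 := by
  have h1 : ((⌊2*y⌋ : ℝ)) ≤ 2*y := Int.floor_le _
  have h2 : 2*y < ⌊2*y⌋ + 1 := Int.lt_floor_add_one _
  rw [Int.floor_eq_iff]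
  have e1 : (2:ℤ) * (⌊2*y⌋/2) ≤ ⌊2*y⌋ := by omega
  have e3 : ⌊2*y⌋ ≤ (2:ℤ) * (⌊2*y⌋/2) + 1 := by omega
  have c1 : ((2 * (⌊2*y⌋/2) : ℤ) : ℝ) ≤ (⌊2*y⌋ : ℝ) := by exact_mod_cast e1
  have c3 : ((⌊2*y⌋ : ℤ) : ℝ) ≤ ((2 * (⌊2*y⌋/2) + 1 : ℤ) : ℝ) := by exact_mod_cast e3
  push_cast at c1 c3 ⊢
  constructor <;> linarith


lemma haar_eq (L k : ℕ) (s : ℝ) :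
    haar L k s =
      if ⌊2 ^ (L+1) * s⌋ = 2 * (k:ℤ) then (2:ℝ) ^ ((L:ℝ) / 2)
      else if ⌊2 ^ (L+1) * s⌋ = 2 * (k:ℤ) + 1 then -(2:ℝ) ^ ((L:ℝ) / 2) else 0 := by
  have hpow : (0:ℝ) < 2 ^ L := by positivity
  have key1 : ((k : ℝ) / 2 ^ L ≤ s ∧ s < ((k : ℝ) + 1 / 2) / 2 ^ L) ↔
      ⌊2 ^ (L+1) * s⌋ = 2 * (k:ℤ) := by
    rw [Int.floor_eq_iff]
    push_cast
    rw [div_le_iff₀ hpow, lt_div_iff₀ hpow, pow_succ]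
    constructor <;> rintro ⟨h1, h2⟩ <;> constructor <;> nlinarith
  have key2 : (((k : ℝ) + 1 / 2) / 2 ^ L ≤ s ∧ s < ((k : ℝ) + 1) / 2 ^ L) ↔
      ⌊2 ^ (L+1) * s⌋ = 2 * (k:ℤ) + 1 := by
    rw [Int.floor_eq_iff]
    push_cast
    rw [div_le_iff₀ hpow, lt_div_iff₀ hpow, pow_succ]
    constructor <;> rintro ⟨h1, h2⟩ <;> constructor <;> nlinarith
  simp only [haar, key1, key2]

lemma sq_haar_const (L : ℕ) : (2:ℝ) ^ ((L:ℝ) / 2) * (2:ℝ) ^ ((L:ℝ) / 2) = 2 ^ L := by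
  rw [← Real.rpow_add two_pos]
  rw [show (L:ℝ)/2 + (L:ℝ)/2 = (L:ℝ) by ring, Real.rpow_natCast]

lemma haar_sum (L : ℕ) (s t : ℝ) (hs : s ∈ Set.Ico (0:ℝ) 1) (ht : t ∈ Set.Ico (0:ℝ) 1) :
    ∑ k ∈ range (2 ^ L), haar L k s * haar L k t =
      (if ⌊2 ^ (L+1) * s⌋ = ⌊2 ^ (L+1) * t⌋ then (2:ℝ) ^ (L+1) else 0)
      - (if ⌊2 ^ L * s⌋ = ⌊2 ^ L * t⌋ then (2:ℝ) ^ L else 0) := by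
  obtain ⟨hs0, hs1⟩ := hs
  obtain ⟨ht0, ht1⟩ := ht
  set p := ⌊2 ^ (L+1) * s⌋ with hp
  set q := ⌊2 ^ (L+1) * t⌋ with hq
  have hp0 : (0:ℤ) ≤ p := Int.floor_nonneg.2 (by positivity)
  have hq0 : (0:ℤ) ≤ q := Int.floor_nonneg.2 (by positivity)
  have hpu : p < 2 * 2 ^ L := by
    have h2 : (2:ℝ) ^ (L+1) * s < ((2 * 2 ^ L : ℤ) : ℝ) := by
      push_cast
      have : (0:ℝ) < 2 ^ (L+1) := by positivity
      rw [show ((2:ℝ) * 2 ^ L) = 2 ^ (L+1) by ring]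
      nlinarith
    exact Int.floor_lt.2 h2
  have hqu : q < 2 * 2 ^ L := by
    have h2 : (2:ℝ) ^ (L+1) * t < ((2 * 2 ^ L : ℤ) : ℝ) := by
      push_cast
      have : (0:ℝ) < 2 ^ (L+1) := by positivity
      rw [show ((2:ℝ) * 2 ^ L) = 2 ^ (L+1) by ring]
      nlinarith
    exact Int.floor_lt.2 h2
  have hfs : ⌊2 ^ L * s⌋ = p / 2 := by
    rw [hp, show (2:ℝ) ^ (L+1) * s = 2 * (2 ^ L * s) by ring, ← floor_half]
  have hft : ⌊2 ^ L * t⌋ = q / 2 := by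
    rw [hq, show (2:ℝ) ^ (L+1) * t = 2 * (2 ^ L * t) by ring, ← floor_half]
  rw [hfs, hft]
  by_cases hmain : p / 2 = q / 2
  · have hk0 : ((p / 2).toNat : ℤ) = p / 2 := Int.toNat_of_nonneg (by omega)
    have hk0mem : (p / 2).toNat ∈ range (2 ^ L) := by
      rw [mem_range, ← Nat.cast_lt (α := ℤ)]
      push_cast
      omega
    rw [Finset.sum_eq_single_of_mem _ hk0mem]
    · rw [haar_eq, haar_eq, ← hp, ← hq]
      split_ifs <;>
        first
          | (exfalso; omega)
          | (nlinarith [sq_haar_const L, pow_succ (2:ℝ) L])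
    · intro k hk hne
      rw [haar_eq, haar_eq, ← hp, ← hq]
      have hkne : (k:ℤ) ≠ p / 2 := by
        intro h
        apply hne
        omega
      split_ifs <;> first | ring1 | (exfalso; omega) | (exfalso; apply hkne; omega)
  · have h1 : ¬ (p = q) := by omega
    rw [if_neg h1, if_neg hmain, Finset.sum_eq_zero]
    · ring
    intro k hk
    rw [haar_eq, haar_eq, ← hp, ← hq]
    split_ifs <;> first | ring1 | (exfalso; omega)

lemma haar_kernel (L : ℕ) (s t : ℝ) (hs : s ∈ Set.Ico (0:ℝ) 1) (ht : t ∈ Set.Ico (0:ℝ) 1) :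
    1 + ∑ j ∈ range L, ∑ k ∈ range (2 ^ j), haar j k s * haar j k t =
      if ⌊2 ^ L * s⌋ = ⌊2 ^ L * t⌋ then (2:ℝ) ^ L else 0 := by
  induction L with
  | zero =>
      simp only [range_zero, sum_empty, add_zero, pow_zero, one_mul]
      rw [if_pos (by rw [Int.floor_eq_zero_iff.mpr hs, Int.floor_eq_zero_iff.mpr ht])]
  | succ L ih =>
      rw [sum_range_succ, ← add_assoc, ih, haar_sum L s t hs ht]
      ring
lemma waveletPdf_eq (n : ℕ) (hn : 0 < n) (J : ℕ) (X : Fin n → ℝ)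
    (hX : ∀ i, X i ∈ Set.Ico (0 : ℝ) 1) (t : ℝ) (ht : t ∈ Set.Ico (0:ℝ) 1) :
    waveletPdf n X J t = (1 / n) * ∑ i,
      (if ⌊2 ^ (J+1) * (X i)⌋ = ⌊2 ^ (J+1) * t⌋ then (2:ℝ) ^ (J+1) else 0) := by
  have key : ∀ i, (1 : ℝ) + ∑ j ∈ range (J+1), ∑ k ∈ range (2 ^ j),
      haar j k (X i) * haar j k t =
      if ⌊2 ^ (J+1) * (X i)⌋ = ⌊2 ^ (J+1) * t⌋ then (2:ℝ) ^ (J+1) else 0 := fun i =>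
    haar_kernel (J+1) (X i) t (hX i) ht
  have hns : ((n:ℝ)) ≠ 0 := Nat.cast_ne_zero.2 hn.ne'
  calc waveletPdf n X J t
      = (1/n) * ∑ i, ((1:ℝ) + ∑ j ∈ range (J+1), ∑ k ∈ range (2 ^ j),
          haar j k (X i) * haar j k t) := by
        rw [waveletPdf]
        have swap : ∑ i, ∑ j ∈ range (J+1), ∑ k ∈ range (2 ^ j),
            haar j k (X i) * haar j k t
            = ∑ j ∈ range (J+1), ∑ k ∈ range (2 ^ j), ∑ i, haar j k (X i) * haar j k t := by
          rw [Finset.sum_comm]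
          exact Finset.sum_congr rfl fun j _ => Finset.sum_comm
        simp only [sum_add_distrib, Finset.sum_const, card_univ, Fintype.card_fin,
          nsmul_eq_mul, mul_add, swap, mul_one]
        congr 1
        · field_simp
        rw [Finset.mul_sum]
        refine Finset.sum_congr rfl fun j _ => ?_
        rw [Finset.mul_sum]
        refine Finset.sum_congr rfl fun k _ => ?_
        rw [empCoef, mul_assoc, Finset.sum_mul]
    _ = (1/n) * ∑ i, (if ⌊2 ^ (J+1) * (X i)⌋ = ⌊2 ^ (J+1) * t⌋ then (2:ℝ) ^ (J+1) else 0) := by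
        rw [Finset.sum_congr rfl fun i _ => key i]

lemma kernel_eq_indicator (L : ℕ) (s : ℝ) :
    ∀ t : ℝ, t ≠ ((⌊2 ^ L * s⌋ : ℝ)) / 2 ^ L → t ≠ ((⌊2 ^ L * s⌋ : ℝ) + 1) / 2 ^ L →
      (if ⌊2 ^ L * s⌋ = ⌊2 ^ L * t⌋ then ((2:ℝ) ^ L) else 0)
        = (Set.Ioc (((⌊2 ^ L * s⌋ : ℝ)) / 2 ^ L) (((⌊2 ^ L * s⌋ : ℝ) + 1) / 2 ^ L)).indicator
            (fun _ => (2:ℝ) ^ L) t := by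
  intro t hta htb
  have hc : (0:ℝ) < 2 ^ L := by positivity
  set m := ⌊2 ^ L * s⌋ with hm
  have hiff : m = ⌊2 ^ L * t⌋ ↔ ((m:ℝ) / 2 ^ L ≤ t ∧ t < ((m:ℝ) + 1) / 2 ^ L) := by
    rw [eq_comm, Int.floor_eq_iff, div_le_iff₀ hc, lt_div_iff₀ hc]
    push_cast
    constructor <;> rintro ⟨h1, h2⟩ <;> constructor <;> nlinarith
  split_ifs with h
  · rw [Set.indicator_of_mem]
    rw [Set.mem_Ioc]
    obtain ⟨h1, h2⟩ := hiff.1 h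
    exact ⟨lt_of_le_of_ne h1 (Ne.symm hta), le_of_lt h2⟩
  · rw [Set.indicator_of_notMem]
    rw [Set.mem_Ioc]
    rintro ⟨h1, h2⟩
    apply h
    rw [hiff]
    constructor
    · linarith
    · exact lt_of_le_of_ne h2 htb

lemma intervalIntegrable_kernel (L : ℕ) (s x : ℝ) (hx : 0 ≤ x) :
    IntervalIntegrable
      (fun t => if ⌊2 ^ L * s⌋ = ⌊2 ^ L * t⌋ then ((2:ℝ) ^ L) else 0) volume 0 x := by
  set a := ((⌊2 ^ L * s⌋ : ℝ)) / 2 ^ L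
  set b := ((⌊2 ^ L * s⌋ : ℝ) + 1) / 2 ^ L
  rw [intervalIntegrable_iff]
  have hind : IntegrableOn ((Set.Ioc a b).indicator (fun _ => (2:ℝ) ^ L)) (Set.uIoc 0 x) := by
    apply MeasureTheory.Integrable.indicator _ measurableSet_Ioc
    exact integrableOn_const (by rw [Set.uIoc_of_le hx]; exact measure_Ioc_lt_top.ne)
  apply hind.congr_fun_ae
  have h0 : volume ({a, b} : Set ℝ) = 0 := (Set.toFinite _).measure_zero _
  have hae : ∀ᵐ t ∂(volume.restrict (Set.uIoc 0 x)), t ∉ ({a, b} : Set ℝ) :=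
    MeasureTheory.ae_restrict_of_ae (measure_eq_zero_iff_ae_notMem.1 h0)
  filter_upwards [hae] with t ht
  have hta : t ≠ a := fun h => ht (by simp [h])
  have htb : t ≠ b := fun h => ht (by simp [h])
  exact (kernel_eq_indicator L s t hta htb).symm

lemma integral_kernel (L : ℕ) (s x : ℝ) (hs : s ∈ Set.Ico (0:ℝ) 1) (hx : 0 ≤ x) :
    ∫ t in (0:ℝ)..x, (if ⌊2 ^ L * s⌋ = ⌊2 ^ L * t⌋ then ((2:ℝ) ^ L) else 0)
      = 2 ^ L * max 0 (min x (((⌊2 ^ L * s⌋ : ℝ) + 1) / 2 ^ L) - ((⌊2 ^ L * s⌋ : ℝ)) / 2 ^ L) := by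
  have hc : (0:ℝ) < 2 ^ L := by positivity
  set a := ((⌊2 ^ L * s⌋ : ℝ)) / 2 ^ L with ha
  set b := ((⌊2 ^ L * s⌋ : ℝ) + 1) / 2 ^ L with hb
  have ha0 : 0 ≤ a := by
    apply div_nonneg _ hc.le
    exact_mod_cast Int.floor_nonneg.2 (by nlinarith [hs.1] : (0:ℝ) ≤ 2 ^ L * s)
  have h0 : volume ({a, b} : Set ℝ) = 0 := (Set.toFinite _).measure_zero _
  have hcong : ∫ t in (0:ℝ)..x, (if ⌊2 ^ L * s⌋ = ⌊2 ^ L * t⌋ then ((2:ℝ) ^ L) else 0)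
      = ∫ t in (0:ℝ)..x, (Set.Ioc a b).indicator (fun _ => (2:ℝ) ^ L) t := by
    apply intervalIntegral.integral_congr_ae
    have hae : ∀ᵐ t ∂volume, t ∉ ({a, b} : Set ℝ) := measure_eq_zero_iff_ae_notMem.1 h0
    filter_upwards [hae] with t ht _
    have hta : t ≠ a := fun h => ht (by simp [h])
    have htb : t ≠ b := fun h => ht (by simp [h])
    exact kernel_eq_indicator L s t hta htb
  rw [hcong, intervalIntegral.integral_of_le hx,
    MeasureTheory.setIntegral_indicator measurableSet_Ioc, MeasureTheory.setIntegral_const,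
    Set.Ioc_inter_Ioc, Real.volume_real_Ioc, smul_eq_mul,
    max_eq_right ha0, max_comm]
  ring

lemma integral_waveletPdf (n : ℕ) (hn : 0 < n) (J : ℕ) (X : Fin n → ℝ)
    (hX : ∀ i, X i ∈ Set.Ico (0 : ℝ) 1) (x : ℝ) (hx0 : 0 ≤ x) (hx1 : x ≤ 1) :
    ∫ t in (0:ℝ)..x, waveletPdf n X J t = (1 / n) * ∑ i,
      2 ^ (J+1) * max 0 (min x (((⌊2 ^ (J+1) * (X i)⌋ : ℝ) + 1) / 2 ^ (J+1))
        - ((⌊2 ^ (J+1) * (X i)⌋ : ℝ)) / 2 ^ (J+1)) := by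
  have step1 : ∫ t in (0:ℝ)..x, waveletPdf n X J t
      = ∫ t in (0:ℝ)..x, (1 / n) * ∑ i,
        (if ⌊2 ^ (J+1) * (X i)⌋ = ⌊2 ^ (J+1) * t⌋ then (2:ℝ) ^ (J+1) else 0) := by
    apply intervalIntegral.integral_congr_ae
    have h0 : volume ({(1:ℝ)} : Set ℝ) = 0 := measure_singleton 1
    have hae : ∀ᵐ t ∂volume, t ∉ ({(1:ℝ)} : Set ℝ) := measure_eq_zero_iff_ae_notMem.1 h0
    filter_upwards [hae] with t ht htI
    rw [Set.uIoc_of_le hx0, Set.mem_Ioc] at htI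
    have ht1 : t ≠ 1 := fun h => ht (by simp [h])
    exact waveletPdf_eq n hn J X hX t ⟨le_of_lt htI.1, lt_of_le_of_ne (htI.2.trans hx1) ht1⟩
  rw [step1, intervalIntegral.integral_const_mul]
  congr 1
  rw [intervalIntegral.integral_finset_sum]
  · exact Finset.sum_congr rfl fun i _ => integral_kernel (J+1) (X i) x (hX i) hx0
  · exact fun i _ => intervalIntegrable_kernel (J+1) (X i) x hx0

lemma absD_le (L : ℕ) (s x : ℝ) (hs : s ∈ Set.Ico (0:ℝ) 1) :
    |2 ^ L * max 0 (min x (((⌊2 ^ L * s⌋ : ℝ) + 1) / 2 ^ L) - ((⌊2 ^ L * s⌋ : ℝ)) / 2 ^ L)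
      - (if s < x then (1:ℝ) else 0)|
      ≤ (Set.Ioo (((⌊2 ^ L * s⌋ : ℝ)) / 2 ^ L) (((⌊2 ^ L * s⌋ : ℝ) + 1) / 2 ^ L)).indicator
          (fun _ => (1:ℝ)) x := by
  have hc : (0:ℝ) < 2 ^ L := by positivity
  set a := ((⌊2 ^ L * s⌋ : ℝ)) / 2 ^ L with ha
  set b := ((⌊2 ^ L * s⌋ : ℝ) + 1) / 2 ^ L with hb
  have has : a ≤ s := by
    rw [ha, div_le_iff₀ hc, mul_comm]
    exact Int.floor_le _
  have hsb : s < b := by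
    rw [hb, lt_div_iff₀ hc, mul_comm]
    exact Int.lt_floor_add_one _
  have hab : a < b := lt_of_le_of_lt has hsb
  have hba : 2 ^ L * (b - a) = 1 := by
    rw [ha, hb]
    field_simp
    ring
  by_cases hmem : x ∈ Set.Ioo a b
  · rw [Set.indicator_of_mem hmem]
    obtain ⟨h1, h2⟩ := hmem
    have hg0 : 0 ≤ max 0 (min x b - a) := le_max_left _ _
    have hg1 : max 0 (min x b - a) ≤ b - a := by
      exact max_le (by linarith) (by nlinarith [min_le_right x b])
    rw [abs_le]
    split_ifs <;> constructor <;> nlinarith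
  · rw [Set.indicator_of_notMem hmem]
    rw [Set.mem_Ioo] at hmem
    push_neg at hmem
    by_cases hxa : x ≤ a
    · have : min x b = x := min_eq_left (by linarith)
      rw [this, if_neg (by linarith : ¬ s < x), max_eq_left (by linarith)]
      simp
    · push_neg at hxa
      have hxb : b ≤ x := hmem hxa
      have : min x b = b := min_eq_right hxb
      rw [this, if_pos (by linarith : s < x), max_eq_right (by linarith)]
      rw [hba]
      simp

noncomputable def gAux (L : ℕ) (s x : ℝ) : ℝ :=
  2 ^ L * max 0 (min x (((⌊2 ^ L * s⌋ : ℝ) + 1) / 2 ^ L) - ((⌊2 ^ L * s⌋ : ℝ)) / 2 ^ L)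

noncomputable def chiAux (s x : ℝ) : ℝ := if s < x then (1:ℝ) else 0

noncomputable def indAux (L : ℕ) (s : ℝ) : ℝ → ℝ :=
  (Set.Ioo (((⌊2 ^ L * s⌋ : ℝ)) / 2 ^ L) (((⌊2 ^ L * s⌋ : ℝ) + 1) / 2 ^ L)).indicator
    (fun _ => (1:ℝ))

lemma gAux_intervalIntegrable (L : ℕ) (s : ℝ) : IntervalIntegrable (gAux L s) volume 0 1 := by
  apply Continuous.intervalIntegrable
  exact continuous_const.mul (continuous_const.max
    ((continuous_id.min continuous_const).sub continuous_const))

lemma uIocFin : volume (Set.uIoc (0:ℝ) 1) < ⊤ := by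
  rw [Set.uIoc_of_le zero_le_one]
  exact measure_Ioc_lt_top

lemma chiAux_intervalIntegrable (s : ℝ) : IntervalIntegrable (chiAux s) volume 0 1 := by
  have hχeq : chiAux s = (Set.Ioi s).indicator (fun _ => (1:ℝ)) := by
    funext x
    simp only [chiAux, Set.indicator_apply, Set.mem_Ioi]
  rw [hχeq, intervalIntegrable_iff]
  exact MeasureTheory.Integrable.indicator
    (integrableOn_const uIocFin.ne) measurableSet_Ioi

lemma indAux_intervalIntegrable (L : ℕ) (s : ℝ) : IntervalIntegrable (indAux L s) volume 0 1 := by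
  rw [indAux, intervalIntegrable_iff]
  exact MeasureTheory.Integrable.indicator
    (integrableOn_const uIocFin.ne) measurableSet_Ioo

lemma integral_indAux_le (L : ℕ) (s : ℝ) :
    (∫ x in (0:ℝ)..1, indAux L s x) ≤ 1 / 2 ^ L := by
  have hc : (0:ℝ) < 2 ^ L := by positivity
  rw [indAux, intervalIntegral.integral_of_le zero_le_one,
    MeasureTheory.setIntegral_indicator measurableSet_Ioo,
    MeasureTheory.setIntegral_const, smul_eq_mul, mul_one]
  set A := ((⌊2 ^ L * s⌋ : ℝ)) / 2 ^ L
  set B := ((⌊2 ^ L * s⌋ : ℝ) + 1) / 2 ^ L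
  have h2 : (volume (Set.Ioc (0:ℝ) 1 ∩ Set.Ioo A B)).toReal
      ≤ (volume (Set.Ioo A B)).toReal := by
    apply ENNReal.toReal_mono _ (measure_mono Set.inter_subset_right)
    rw [Real.volume_Ioo]
    exact ENNReal.ofReal_ne_top
  refine h2.trans ?_
  rw [Real.volume_Ioo, ENNReal.toReal_ofReal']
  have hBA : B - A = 1 / 2 ^ L := by
    simp only [A, B]
    field_simp
    ring
  rw [hBA]
  exact max_le le_rfl (by positivity)


set_option maxHeartbeats 1000000 in
/-- The Wasserstein-1 distance between the cdf reconstructed from the `J`-th order Haar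
wavelet expansion and the empirical cdf is at most `2^{-(J+1)}`. -/
theorem wasserstein_waveletCdf_empCdf_le (n : ℕ) (hn : 0 < n) (J : ℕ) (X : Fin n → ℝ)
    (hX : ∀ i, X i ∈ Set.Ico (0 : ℝ) 1) :
    (∫ x in (0 : ℝ)..1,
        |(∫ t in (0 : ℝ)..x, waveletPdf n X J t) - empCdf n X x|) ≤ 1 / 2 ^ (J + 1) := by
  have hc : (0:ℝ) < 2 ^ (J+1) := by positivity
  have hn' : (0:ℝ) < n := Nat.cast_pos.2 hn
  have hgInt : ∀ i : Fin n, IntervalIntegrable (gAux (J+1) (X i)) volume 0 1 :=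
    fun i => gAux_intervalIntegrable (J+1) (X i)
  have hχInt : ∀ i : Fin n, IntervalIntegrable (chiAux (X i)) volume 0 1 :=
    fun i => chiAux_intervalIntegrable (X i)
  have hindInt : ∀ i : Fin n, IntervalIntegrable (indAux (J+1) (X i)) volume 0 1 :=
    fun i => indAux_intervalIntegrable (J+1) (X i)
  have hLHSInt : IntervalIntegrable
      (fun x => |(1/(n:ℝ)) * ∑ i, (gAux (J+1) (X i) x - chiAux (X i) x)|) volume 0 1 := by
    have h2 : (fun x => ∑ i, (gAux (J+1) (X i) x - chiAux (X i) x))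
        = ∑ i : Fin n, (fun x => gAux (J+1) (X i) x - chiAux (X i) x) := by
      funext x
      rw [Finset.sum_apply]
    have hsum : IntervalIntegrable
        (fun x => ∑ i, (gAux (J+1) (X i) x - chiAux (X i) x)) volume 0 1 := by
      rw [h2]
      exact IntervalIntegrable.sum univ (fun i _ => (hgInt i).sub (hχInt i))
    exact (hsum.const_mul (1/(n:ℝ))).abs
  have hRHSInt : IntervalIntegrable
      (fun x => (1/(n:ℝ)) * ∑ i, indAux (J+1) (X i) x) volume 0 1 := by
    have h2 : (fun x => ∑ i, indAux (J+1) (X i) x)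
        = ∑ i : Fin n, (fun x => indAux (J+1) (X i) x) := by
      funext x
      rw [Finset.sum_apply]
    have hsum : IntervalIntegrable (fun x => ∑ i, indAux (J+1) (X i) x) volume 0 1 := by
      rw [h2]
      exact IntervalIntegrable.sum univ (fun i _ => hindInt i)
    exact hsum.const_mul (1/(n:ℝ))
  have step1 : (∫ x in (0 : ℝ)..1,
      |(∫ t in (0 : ℝ)..x, waveletPdf n X J t) - empCdf n X x|)
      = ∫ x in (0:ℝ)..1, |(1/(n:ℝ)) * ∑ i, (gAux (J+1) (X i) x - chiAux (X i) x)| := by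
    apply intervalIntegral.integral_congr
    intro x hx
    dsimp only
    rw [Set.uIcc_of_le zero_le_one, Set.mem_Icc] at hx
    rw [integral_waveletPdf n hn J X hX x hx.1 hx.2, empCdf]
    rw [← mul_sub, ← Finset.sum_sub_distrib]
    simp only [gAux, chiAux]
  have step2 : (∫ x in (0:ℝ)..1, |(1/(n:ℝ)) * ∑ i, (gAux (J+1) (X i) x - chiAux (X i) x)|)
      ≤ ∫ x in (0:ℝ)..1, (1/(n:ℝ)) * ∑ i, indAux (J+1) (X i) x := by
    apply intervalIntegral.integral_mono_on zero_le_one hLHSInt hRHSInt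
    intro x hx
    rw [abs_mul, abs_of_nonneg (by positivity : (0:ℝ) ≤ 1/(n:ℝ))]
    apply mul_le_mul_of_nonneg_left _ (by positivity : (0:ℝ) ≤ 1/(n:ℝ))
    refine (Finset.abs_sum_le_sum_abs _ _).trans (Finset.sum_le_sum fun i _ => ?_)
    exact (by simpa [gAux, chiAux, indAux] using absD_le (J+1) (X i) x (hX i))
  have step3 : (∫ x in (0:ℝ)..1, (1/(n:ℝ)) * ∑ i, indAux (J+1) (X i) x)
      ≤ 1 / 2 ^ (J+1) := by
    rw [intervalIntegral.integral_const_mul, intervalIntegral.integral_finset_sum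
      (fun i _ => hindInt i)]
    have hper : ∀ i, (∫ x in (0:ℝ)..1, indAux (J+1) (X i) x) ≤ 1 / 2 ^ (J+1) :=
      fun i => integral_indAux_le (J+1) (X i)
    calc (1/(n:ℝ)) * ∑ i, (∫ x in (0:ℝ)..1, indAux (J+1) (X i) x)
        ≤ (1/(n:ℝ)) * ∑ _i : Fin n, (1:ℝ) / 2 ^ (J+1) := by
          apply mul_le_mul_of_nonneg_left (Finset.sum_le_sum fun i _ => hper i)
          positivity
      _ = 1 / 2 ^ (J+1) := by
          rw [Finset.sum_const, card_univ, Fintype.card_fin, nsmul_eq_mul]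
          field_simp
  rw [step1]
  exact step2.trans step3
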